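/- Let λ and μ be integral partitions. If λ ≠ μ (as multisets) and ‖λ‖_p = ‖μ‖_p for some real p with 1 < p < ∞, then for every positive integer n the n-fold product λ^{×n} does not embed into μ^{×n}. -/

import Mathlib

/-- An integral partition: a finite (nonempty) multiset of positive integers. -/
def IsPartition (l : Multiset ℕ) : Prop := l ≠ 0 ∧ ∀ x ∈ l, 0 < x

/-- `Embeds l m` : the entries of `l` can be grouped and the groups assigned
bijectively (as a multiset) to the bins of `m`, each group fitting in its bin.
This is the bin-packing embedding `l ↪ m`. -/
def Embeds (l m : Multiset ℕ) : Prop :=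
  ∃ T : Multiset (Multiset ℕ × ℕ),
    (T.map Prod.fst).sum = l ∧ T.map Prod.snd = m ∧ ∀ q ∈ T, q.1.sum ≤ q.2

/-- The product of two partitions: all pairwise products of entries. -/
def mprod (l m : Multiset ℕ) : Multiset ℕ := l.bind fun a => m.map (a * ·)

/-- The `n`-fold product `l^{×n}`. -/
def prodPow (l : Multiset ℕ) : ℕ → Multiset ℕ
  | 0 => {1}
  | n + 1 => mprod l (prodPow l n)

/-- The `p`-norm of a partition: `(∑ λᵢ^p)^(1/p)`. -/
noncomputable def pnorm (l : Multiset ℕ) (p : ℝ) : ℝ :=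
  ((l.map fun a => (a : ℝ) ^ p).sum) ^ (1 / p)

/-- `l ⪯_S m` : for every positive `x`, the sum of the entries of `l` that
are `≥ x` is at most the corresponding sum for `m`. -/
def Supermajorized (l m : Multiset ℕ) : Prop :=
  ∀ x : ℕ, 0 < x →
    ((l.filter fun a => x ≤ a).sum ≤ (m.filter fun a => x ≤ a).sum)

/-- `l s↪ m` : there is a partition `ν` with `l×ν ↪ m×ν`. -/
def StablyEmbeds (l m : Multiset ℕ) : Prop :=
  ∃ ν : Multiset ℕ, IsPartition ν ∧ Embeds (mprod l ν) (mprod m ν)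

/-- `l b↪ m` : for every rational `ε > 0` there are positive integers `N, M`
with `M ≤ N(1+ε)` and `l^{×N} ↪ m^{×M}`. -/
def BulkEmbeds (l m : Multiset ℕ) : Prop :=
  ∀ ε : ℚ, 0 < ε → ∃ N M : ℕ, 0 < N ∧ 0 < M ∧ (M : ℚ) ≤ (N : ℚ) * (1 + ε) ∧
    Embeds (prodPow l N) (prodPow m M)

/-! ### Auxiliary machinery: Dirichlet-type embedding into a monoid algebra -/

noncomputable def phi (w : Multiset ℕ) : AddMonoidAlgebra ℤ ℝ :=
  (w.map fun a : ℕ => AddMonoidAlgebra.single (Real.log (a : ℝ)) (1 : ℤ)).sum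

lemma phi_add (u v : Multiset ℕ) : phi (u + v) = phi u + phi v := by
  simp [phi]

noncomputable def phiHom : Multiset ℕ →+ AddMonoidAlgebra ℤ ℝ :=
  AddMonoidHom.mk' phi phi_add

lemma log_nat_inj {a k : ℕ} (ha : 0 < a) (hk : 0 < k) (h : Real.log a = Real.log k) :
    a = k := by
  have := Real.log_injOn_pos (Set.mem_Ioi.2 (by exact_mod_cast ha))
    (Set.mem_Ioi.2 (by exact_mod_cast hk)) h
  exact_mod_cast this

lemma phi_coeff (w : Multiset ℕ) (hw : ∀ x ∈ w, 0 < x) (k : ℕ) (hk : 0 < k) :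
    (phi w).coeff (Real.log k) = (w.count k : ℤ) := by
  induction w using Multiset.induction_on with
  | empty => simp [phi]
  | cons a t ih =>
    have ha : 0 < a := hw a (Multiset.mem_cons_self a t)
    have ht : ∀ x ∈ t, 0 < x := fun x hx => hw x (Multiset.mem_cons_of_mem hx)
    have hphi : phi (a ::ₘ t) = AddMonoidAlgebra.single (Real.log a) 1 + phi t := by
      simp [phi]
    rw [hphi]
    have happ : (AddMonoidAlgebra.single (Real.log a) (1:ℤ) + phi t).coeff (Real.log k)
        = (AddMonoidAlgebra.single (Real.log a) (1:ℤ)).coeff (Real.log k) + (phi t).coeff (Real.log k) :=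
      Finsupp.add_apply _ _ _
    rw [happ, ih ht, Multiset.count_cons]
    by_cases h : k = a
    · subst h
      simp [AddMonoidAlgebra.coeff_single, Finsupp.single_apply]
      ring
    · have hne : Real.log a ≠ Real.log k := fun hc => h (log_nat_inj hk ha hc.symm)
      simp [AddMonoidAlgebra.coeff_single, Finsupp.single_apply, hne, h]

lemma phi_inj {u v : Multiset ℕ} (hu : ∀ x ∈ u, 0 < x) (hv : ∀ x ∈ v, 0 < x)
    (h : phi u = phi v) : u = v := by
  ext k
  rcases Nat.eq_zero_or_pos k with hk | hk
  · subst hk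
    rw [Multiset.count_eq_zero_of_notMem (fun hc => lt_irrefl 0 (hu 0 hc)),
      Multiset.count_eq_zero_of_notMem (fun hc => lt_irrefl 0 (hv 0 hc))]
  · have h2 : (phi u).coeff (Real.log k) = (phi v).coeff (Real.log k) := by rw [h]
    rw [phi_coeff u hu k hk, phi_coeff v hv k hk] at h2
    exact_mod_cast h2

lemma phi_ne_zero {w : Multiset ℕ} (hw : ∀ x ∈ w, 0 < x) (hne : w ≠ 0) :
    phi w ≠ 0 := by
  obtain ⟨a, ha⟩ := Multiset.exists_mem_of_ne_zero hne
  intro hc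
  have h0 : (phi w).coeff (Real.log a) = (w.count a : ℤ) := phi_coeff w hw a (hw a ha)
  rw [hc] at h0
  have : 0 < w.count a := Multiset.count_pos.2 ha
  simp only [AddMonoidAlgebra.coeff_zero, Finsupp.coe_zero, Pi.zero_apply] at h0
  omega

lemma phi_map_mul (a : ℕ) (ha : 0 < a) (v : Multiset ℕ) (hv : ∀ x ∈ v, 0 < x) :
    phi (v.map (a * ·)) = AddMonoidAlgebra.single (Real.log a) 1 * phi v := by
  unfold phi
  rw [Multiset.map_map, ← Multiset.sum_map_mul_left]
  congr 1
  apply Multiset.map_congr rfl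
  intro b hb
  have hb' : 0 < b := hv b hb
  simp only [Function.comp_apply]
  rw [AddMonoidAlgebra.single_mul_single, mul_one]
  congr 1
  push_cast
  rw [Real.log_mul (by exact_mod_cast ha.ne') (by exact_mod_cast hb'.ne')]

lemma phi_mprod (u v : Multiset ℕ) (hu : ∀ x ∈ u, 0 < x) (hv : ∀ x ∈ v, 0 < x) :
    phi (mprod u v) = phi u * phi v := by
  induction u using Multiset.induction_on with
  | empty => simp [mprod, phi]
  | cons a t ih =>
    have ha : 0 < a := hu a (Multiset.mem_cons_self a t)
    have ht : ∀ x ∈ t, 0 < x := fun x hx => hu x (Multiset.mem_cons_of_mem hx)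
    have h1 : mprod (a ::ₘ t) v = v.map (a * ·) + mprod t v := Multiset.cons_bind a t _
    rw [h1, phi_add, phi_map_mul a ha v hv, ih ht]
    have h2 : phi (a ::ₘ t) = AddMonoidAlgebra.single (Real.log a) 1 + phi t := by
      simp [phi]
    rw [h2, add_mul]

lemma prodPow_pos {l : Multiset ℕ} (hl : ∀ x ∈ l, 0 < x) (n : ℕ) :
    ∀ x ∈ prodPow l n, 0 < x := by
  induction n with
  | zero => intro x hx; simp [prodPow] at hx; omega
  | succ n ih =>
    intro x hx
    simp only [prodPow, mprod, Multiset.mem_bind, Multiset.mem_map] at hx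
    obtain ⟨a, ha, b, hb, rfl⟩ := hx
    exact Nat.mul_pos (hl a ha) (ih b hb)

lemma prodPow_ne_zero {l : Multiset ℕ} (hl : l ≠ 0) (n : ℕ) : prodPow l n ≠ 0 := by
  induction n with
  | zero => simp [prodPow]
  | succ n ih =>
    obtain ⟨a, ha⟩ := Multiset.exists_mem_of_ne_zero hl
    obtain ⟨b, hb⟩ := Multiset.exists_mem_of_ne_zero ih
    intro hc
    have : a * b ∈ prodPow l (n+1) := by
      simp only [prodPow, mprod, Multiset.mem_bind, Multiset.mem_map]
      exact ⟨a, ha, b, hb, rfl⟩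
    rw [hc] at this
    exact Multiset.notMem_zero _ this

lemma phi_one : phi {1} = 1 := by
  simp [phi, AddMonoidAlgebra.one_def]

lemma phi_prodPow (l : Multiset ℕ) (hl : ∀ x ∈ l, 0 < x) (n : ℕ) :
    phi (prodPow l n) = (phi l) ^ n := by
  induction n with
  | zero => simpa [prodPow] using phi_one
  | succ n ih =>
    rw [show prodPow l (n+1) = mprod l (prodPow l n) from rfl,
      phi_mprod l _ hl (prodPow_pos hl n), ih, pow_succ]
    ring

/-! ### p-th power sums -/

noncomputable def psum (w : Multiset ℕ) (p : ℝ) : ℝ :=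
  (w.map fun a : ℕ => ((a : ℝ)) ^ p).sum

lemma psum_eq_pnorm_arg (w : Multiset ℕ) (p : ℝ) :
    (w.map fun a => (a : ℝ) ^ p).sum = psum w p := by
  induction w using Multiset.induction_on with
  | empty => simp [psum]
  | cons a t ih => simp_all [psum]

lemma psum_nonneg (w : Multiset ℕ) (p : ℝ) : 0 ≤ psum w p := by
  apply Multiset.sum_nonneg
  intro x hx
  obtain ⟨a, _, rfl⟩ := Multiset.mem_map.1 hx
  exact Real.rpow_nonneg (Nat.cast_nonneg a) p

lemma psum_add (u v : Multiset ℕ) (p : ℝ) : psum (u + v) p = psum u p + psum v p := by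
  simp [psum]

lemma psum_mprod (u v : Multiset ℕ) (p : ℝ) :
    psum (mprod u v) p = psum u p * psum v p := by
  induction u using Multiset.induction_on with
  | empty => simp [mprod, psum]
  | cons a t ih =>
    have h1 : mprod (a ::ₘ t) v = v.map (a * ·) + mprod t v := Multiset.cons_bind a t _
    rw [h1, psum_add, ih]
    have h2 : psum (a ::ₘ t) p = (a:ℝ)^p + psum t p := by simp [psum]
    rw [h2, add_mul]
    congr 1
    unfold psum
    rw [Multiset.map_map, ← Multiset.sum_map_mul_left]
    congr 1
    apply Multiset.map_congr rfl
    intro b _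
    simp only [Function.comp_apply]
    push_cast
    rw [Real.mul_rpow (Nat.cast_nonneg a) (Nat.cast_nonneg b)]

lemma psum_prodPow (l : Multiset ℕ) (p : ℝ) (n : ℕ) :
    psum (prodPow l n) p = (psum l p) ^ n := by
  induction n with
  | zero => simp [prodPow, psum]
  | succ n ih =>
    rw [show prodPow l (n+1) = mprod l (prodPow l n) from rfl, psum_mprod, ih, pow_succ]
    ring

/-! ### Strict superadditivity of `x ^ p` -/

lemma rpow_split {z p : ℝ} (hz : 0 < z) : z ^ p = z * z ^ (p - 1) := by
  conv_lhs => rw [show p = 1 + (p - 1) by ring]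
  rw [Real.rpow_add hz, Real.rpow_one]

lemma rpow_add_lt {x y p : ℝ} (hx : 0 < x) (hy : 0 < y) (hp : 1 < p) :
    x ^ p + y ^ p < (x + y) ^ p := by
  have hxy : 0 < x + y := by linarith
  have h1 : x ^ (p-1) < (x+y) ^ (p-1) :=
    Real.rpow_lt_rpow hx.le (by linarith) (by linarith)
  have h2 : y ^ (p-1) < (x+y) ^ (p-1) :=
    Real.rpow_lt_rpow hy.le (by linarith) (by linarith)
  calc x ^ p + y ^ p = x * x ^ (p-1) + y * y ^ (p-1) := by
        rw [rpow_split hx, rpow_split hy]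
    _ < x * (x+y) ^ (p-1) + y * (x+y) ^ (p-1) :=
        add_lt_add (mul_lt_mul_of_pos_left h1 hx) (mul_lt_mul_of_pos_left h2 hy)
    _ = (x + y) * (x+y) ^ (p-1) := by ring
    _ = (x + y) ^ p := (rpow_split hxy).symm

lemma rpow_add_le {x y p : ℝ} (hx : 0 ≤ x) (hy : 0 ≤ y) (hp : 1 < p) :
    x ^ p + y ^ p ≤ (x + y) ^ p := by
  rcases eq_or_lt_of_le hx with h | h
  · rw [← h, Real.zero_rpow (by linarith), zero_add, zero_add]
  rcases eq_or_lt_of_le hy with h' | h'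
  · rw [← h', Real.zero_rpow (by linarith), add_zero, add_zero]
  exact (rpow_add_lt h h' hp).le

lemma psum_le_rpow_sum (w : Multiset ℕ) {p : ℝ} (hp : 1 < p) :
    psum w p ≤ ((w.sum : ℝ)) ^ p := by
  induction w using Multiset.induction_on with
  | empty => simp [psum, Real.zero_rpow (by linarith : p ≠ 0)]
  | cons a t ih =>
    have h2 : psum (a ::ₘ t) p = (a:ℝ)^p + psum t p := by simp [psum]
    rw [h2, Multiset.sum_cons]
    calc (a:ℝ)^p + psum t p ≤ (a:ℝ)^p + ((t.sum:ℝ))^p := by linarith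
      _ ≤ ((a:ℝ) + (t.sum:ℝ))^p := rpow_add_le (Nat.cast_nonneg a) (Nat.cast_nonneg _) hp
      _ = (((a + t.sum : ℕ)):ℝ)^p := by push_cast; ring_nf

lemma psum_eq_singleton {w : Multiset ℕ} (hw : ∀ x ∈ w, 0 < x) {p : ℝ} (hp : 1 < p)
    (hne : w ≠ 0) (heq : psum w p = ((w.sum : ℝ)) ^ p) : w = {w.sum} := by
  obtain ⟨a, ha⟩ := Multiset.exists_mem_of_ne_zero hne
  obtain ⟨t, rfl⟩ := Multiset.exists_cons_of_mem ha
  by_cases ht0 : t = 0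
  · subst ht0; simp
  · exfalso
    obtain ⟨b, hb⟩ := Multiset.exists_mem_of_ne_zero ht0
    have hbpos : 0 < b := hw b (Multiset.mem_cons_of_mem hb)
    have htsum : 0 < t.sum := lt_of_lt_of_le hbpos (Multiset.le_sum_of_mem hb)
    have hapos : 0 < a := hw a (Multiset.mem_cons_self a t)
    have h2 : psum (a ::ₘ t) p = (a:ℝ)^p + psum t p := by simp [psum]
    have hchain : psum (a ::ₘ t) p < (((a ::ₘ t).sum : ℝ)) ^ p := by
      rw [h2, Multiset.sum_cons]
      calc (a:ℝ)^p + psum t p ≤ (a:ℝ)^p + ((t.sum:ℝ))^p := by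
            linarith [psum_le_rpow_sum t hp]
        _ < ((a:ℝ) + (t.sum:ℝ))^p := rpow_add_lt (by exact_mod_cast hapos)
            (by exact_mod_cast htsum) hp
        _ = (((a + t.sum : ℕ)):ℝ)^p := by push_cast; ring_nf
    rw [heq] at hchain
    exact lt_irrefl _ hchain

/-! ### Equality case of the embedding inequality -/

lemma embeds_psum_eq {L M : Multiset ℕ} (hL : ∀ x ∈ L, 0 < x) (hM : ∀ x ∈ M, 0 < x)
    {p : ℝ} (hp : 1 < p) (hE : Embeds L M) (hsum : psum L p = psum M p) : L = M := by
  obtain ⟨T, hfst, hsnd, hle⟩ := hE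
  have hp0 : p ≠ 0 := by linarith
  -- membership facts
  have hfstle : ∀ q ∈ T, q.1 ≤ (T.map Prod.fst).sum := by
    intro q hq
    obtain ⟨T', rfl⟩ := Multiset.exists_cons_of_mem hq
    rw [Multiset.map_cons, Multiset.sum_cons]
    exact le_add_right (le_refl q.1)
  have hq2pos : ∀ q ∈ T, 0 < q.2 := by
    intro q hq
    exact hM q.2 (hsnd ▸ Multiset.mem_map_of_mem Prod.snd hq)
  -- the two sums
  have key1 : psum L p = (T.map fun q => psum q.1 p).sum := by
    have : ∀ S : Multiset (Multiset ℕ), psum S.sum p = (S.map fun w => psum w p).sum := by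
      intro S
      induction S using Multiset.induction_on with
      | empty => simp [psum]
      | cons u S ih => rw [Multiset.sum_cons, psum_add, ih, Multiset.map_cons,
          Multiset.sum_cons]
    rw [← hfst, this, Multiset.map_map]
    rfl
  have key2 : psum M p = (T.map fun q => ((q.2 : ℝ)) ^ p).sum := by
    rw [← hsnd]
    unfold psum
    rw [Multiset.map_map]
    rfl
  have hpt : ∀ q ∈ T, psum q.1 p ≤ ((q.2 : ℝ)) ^ p := by
    intro q hq
    calc psum q.1 p ≤ ((q.1.sum : ℝ)) ^ p := psum_le_rpow_sum q.1 hp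
      _ ≤ ((q.2 : ℝ)) ^ p := Real.rpow_le_rpow (Nat.cast_nonneg _)
          (by exact_mod_cast hle q hq) (by linarith)
  have heqpt : ∀ q ∈ T, psum q.1 p = ((q.2 : ℝ)) ^ p := by
    by_contra hc
    push_neg at hc
    obtain ⟨q, hq, hneq⟩ := hc
    have : (T.map fun q => psum q.1 p).sum < (T.map fun q => ((q.2 : ℝ)) ^ p).sum :=
      Multiset.sum_lt_sum hpt ⟨q, hq, lt_of_le_of_ne (hpt q hq) hneq⟩
    rw [← key1, ← key2, hsum] at this
    exact lt_irrefl _ this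
  -- each part is a singleton equal to its bin
  have hsingle : ∀ q ∈ T, q.1 = ({q.2} : Multiset ℕ) := by
    intro q hq
    have e1 : psum q.1 p = ((q.2 : ℝ)) ^ p := heqpt q hq
    have e2 : ((q.1.sum : ℝ)) ^ p = ((q.2 : ℝ)) ^ p := le_antisymm
      (Real.rpow_le_rpow (Nat.cast_nonneg _) (by exact_mod_cast hle q hq) (by linarith))
      (by rw [← e1]; exact psum_le_rpow_sum q.1 hp)
    have esum : q.1.sum = q.2 := by
      have := Real.rpow_left_injOn hp0 (Set.mem_setOf.2 (Nat.cast_nonneg q.1.sum : (0:ℝ) ≤ _))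
        (Set.mem_setOf.2 (Nat.cast_nonneg q.2 : (0:ℝ) ≤ _)) e2
      exact_mod_cast this
    have hq1pos : ∀ x ∈ q.1, 0 < x := fun x hx =>
      hL x (hfst ▸ Multiset.mem_of_le (hfstle q hq) hx)
    have hq1ne : q.1 ≠ 0 := by
      intro h0
      rw [h0] at esum
      simp only [Multiset.sum_zero] at esum
      have := hq2pos q hq
      omega
    have hpeq : psum q.1 p = ((q.1.sum : ℝ)) ^ p := by rw [e2, ← e1]
    have := psum_eq_singleton hq1pos hp hq1ne hpeq
    rw [this, esum]
  -- conclude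
  have : T.map Prod.fst = T.map fun q => ({q.2} : Multiset ℕ) :=
    Multiset.map_congr rfl hsingle
  have hmm : (T.map fun q => ({q.2} : Multiset ℕ))
      = (T.map Prod.snd).map fun a => ({a} : Multiset ℕ) := by
    rw [Multiset.map_map]; rfl
  rw [← hfst, this, hmm, Multiset.sum_map_singleton, hsnd]

theorem stmt_1 (l m : Multiset ℕ) (hl : IsPartition l) (hm : IsPartition m)
    (hne : l ≠ m) (p : ℝ) (hp : 1 < p) (heq : pnorm l p = pnorm m p)
    (n : ℕ) (hn : 0 < n) :
    ¬ Embeds (prodPow l n) (prodPow m n) := by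
  intro hE
  have hp0 : p ≠ 0 := by linarith
  -- from pnorm equality to psum equality
  have hsum_lm : psum l p = psum m p := by
    unfold pnorm at heq
    rw [psum_eq_pnorm_arg, psum_eq_pnorm_arg] at heq
    exact Real.rpow_left_injOn (one_div_ne_zero hp0)
      (Set.mem_setOf.2 (psum_nonneg l p)) (Set.mem_setOf.2 (psum_nonneg m p)) heq
  have hP : psum (prodPow l n) p = psum (prodPow m n) p := by
    rw [psum_prodPow, psum_prodPow, hsum_lm]
  have hLM : prodPow l n = prodPow m n :=
    embeds_psum_eq (prodPow_pos hl.2 n) (prodPow_pos hm.2 n) hp hE hP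
  have hphin : (phi l) ^ n = (phi m) ^ n := by
    rw [← phi_prodPow l hl.2, ← phi_prodPow m hm.2, hLM]
  -- the geometric-sum witness multiset
  set W : Multiset ℕ := ∑ i ∈ Finset.range n, mprod (prodPow l i) (prodPow m (n-1-i)) with hW
  have hWpos : ∀ x ∈ W, 0 < x := by
    intro x hx
    rw [hW] at hx
    obtain ⟨i, _, hxi⟩ := Multiset.mem_sum.1 hx
    simp only [mprod, Multiset.mem_bind, Multiset.mem_map] at hxi
    obtain ⟨a, ha, b, hb, rfl⟩ := hxi
    exact Nat.mul_pos (prodPow_pos hl.2 i a ha) (prodPow_pos hm.2 _ b hb)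
  have hWne : W ≠ 0 := by
    obtain ⟨b, hb⟩ := Multiset.exists_mem_of_ne_zero (prodPow_ne_zero hm.1 (n-1-0))
    intro hc
    have : (1 * b : ℕ) ∈ W := by
      rw [hW]
      refine Multiset.mem_sum.2 ⟨0, Finset.mem_range.2 hn, ?_⟩
      simp only [mprod, Multiset.mem_bind, Multiset.mem_map]
      exact ⟨1, by simp [prodPow], b, hb, rfl⟩
    rw [hc] at this
    exact Multiset.notMem_zero _ this
  have hphiW : phi W = ∑ i ∈ Finset.range n, (phi l) ^ i * (phi m) ^ (n-1-i) := by
    have hmap := map_sum phiHom (fun i => mprod (prodPow l i) (prodPow m (n-1-i)))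
      (Finset.range n)
    rw [show ⇑phiHom = phi from rfl] at hmap
    rw [hW, hmap]
    refine Finset.sum_congr rfl fun i _ => ?_
    rw [phi_mprod _ _ (prodPow_pos hl.2 i) (prodPow_pos hm.2 _),
      phi_prodPow l hl.2, phi_prodPow m hm.2]
  have hgeom : phi W * (phi l - phi m) = 0 := by
    rw [hphiW, geom_sum₂_mul, hphin, sub_self]
  rcases mul_eq_zero.1 hgeom with h | h
  · exact phi_ne_zero hWpos hWne h
  · exact hne (phi_inj hl.2 hm.2 (sub_eq_zero.1 h))
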